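/- A closed subset K of the harmonic little α-Bloch space HB₀(α) is compact if and only if K is bounded in norm and lim_{|z|→1} sup_{f∈K} (1-|z|²)^α(|f_z(z)| + |f_{z̄}(z)|) = 0. -/

import Mathlib

open Complex Metric Set Filter Topology

noncomputable section

/-- The open unit disk in ℂ. -/
def unitDisk : Set ℂ := Metric.ball 0 1

/-- Wirtinger derivative f_z = (1/2)(f_x - i f_y). -/
def wZ (f : ℂ → ℂ) (z : ℂ) : ℂ :=
  (1/2) * (fderiv ℝ f z 1 - Complex.I * fderiv ℝ f z Complex.I)

/-- Wirtinger derivative f_z̄ = (1/2)(f_x + i f_y). -/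
def wZbar (f : ℂ → ℂ) (z : ℂ) : ℂ :=
  (1/2) * (fderiv ℝ f z 1 + Complex.I * fderiv ℝ f z Complex.I)

/-- f is harmonic on the disk: canonical decomposition f = h + conj g with h, g holomorphic. -/
def HarmonicDisk (f : ℂ → ℂ) : Prop :=
  ∃ h g : ℂ → ℂ, DifferentiableOn ℂ h unitDisk ∧ DifferentiableOn ℂ g unitDisk ∧
    ∀ z ∈ unitDisk, f z = h z + (starRingEnd ℂ) (g z)

/-- The weight (1-|z|²)^α (|f_z(z)| + |f_z̄(z)|). -/
def weight (α : ℝ) (f : ℂ → ℂ) (z : ℂ) : ℝ :=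
  (1 - ‖z‖ ^ 2) ^ α * (‖wZ f z‖ + ‖wZbar f z‖)

/-- The Bloch seminorm sup_{z ∈ D} weight α f z. -/
def semiNorm (α : ℝ) (f : ℂ → ℂ) : ℝ := sSup (weight α f '' unitDisk)

/-- The HB(α) norm. -/
def HBnorm (α : ℝ) (f : ℂ → ℂ) : ℝ := ‖f 0‖ + semiNorm α f

/-- Membership in the harmonic α-Bloch space HB(α). -/
def memHB (α : ℝ) (f : ℂ → ℂ) : Prop :=
  HarmonicDisk f ∧ BddAbove (weight α f '' unitDisk)

/-- The little-oh condition: weight α f z → 0 as |z| → 1. -/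
def littleOh (α : ℝ) (f : ℂ → ℂ) : Prop :=
  ∀ ε > 0, ∃ r < (1:ℝ), ∀ z ∈ unitDisk, r < ‖z‖ → weight α f z < ε

/-- Membership in the harmonic little α-Bloch space HB₀(α). -/
def memHB0 (α : ℝ) (f : ℂ → ℂ) : Prop := memHB α f ∧ littleOh α f

/-- τ_{φ,α}(z) = (1-|z|²)^α |φ'(z)| / (1-|φ(z)|²)^α. -/
def tau (α : ℝ) (φ : ℂ → ℂ) (z : ℂ) : ℝ :=
  (1 - ‖z‖ ^ 2) ^ α * ‖deriv φ z‖ / (1 - ‖φ z‖ ^ 2) ^ α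

lemma mem_unitDisk_iff {z : ℂ} : z ∈ unitDisk ↔ ‖z‖ < 1 := by
  simp [unitDisk, Metric.mem_ball, Complex.dist_eq]
lemma isOpen_unitDisk : IsOpen unitDisk := isOpen_ball
lemma zero_mem_unitDisk : (0:ℂ) ∈ unitDisk := by simp [unitDisk]

lemma wirtinger_of_decomp {f h g : ℂ → ℂ} {z : ℂ}
    (hh : DifferentiableAt ℂ h z) (hg : DifferentiableAt ℂ g z)
    (hf : f =ᶠ[𝓝 z] fun w => h w + (starRingEnd ℂ) (g w)) :
    wZ f z = deriv h z ∧ wZbar f z = (starRingEnd ℂ) (deriv g z) := by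
  set Lh : ℂ →L[ℝ] ℂ := (ContinuousLinearMap.smulRight (1 : ℂ →L[ℂ] ℂ) (deriv h z)).restrictScalars ℝ with hLh
  set Lg : ℂ →L[ℝ] ℂ := (ContinuousLinearMap.smulRight (1 : ℂ →L[ℂ] ℂ) (deriv g z)).restrictScalars ℝ with hLg
  have hh' : HasFDerivAt h Lh z := (hh.hasDerivAt.hasFDerivAt).restrictScalars ℝ
  have hg' : HasFDerivAt g Lg z := (hg.hasDerivAt.hasFDerivAt).restrictScalars ℝ
  have hcg : HasFDerivAt (fun w => star (g w))
      (((starL' ℝ : ℂ ≃L[ℝ] ℂ) : ℂ →L[ℝ] ℂ) ∘L Lg) z := hg'.star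
  have hF : HasFDerivAt (fun w => h w + (starRingEnd ℂ) (g w))
      (Lh + ((starL' ℝ : ℂ ≃L[ℝ] ℂ) : ℂ →L[ℝ] ℂ) ∘L Lg) z := by
    exact hh'.add hcg
  have hfd : fderiv ℝ f z = Lh + ((starL' ℝ : ℂ ≃L[ℝ] ℂ) : ℂ →L[ℝ] ℂ) ∘L Lg := by
    rw [hf.fderiv_eq, hF.fderiv]
  have e1 : fderiv ℝ f z 1 = deriv h z + (starRingEnd ℂ) (deriv g z) := by
    simp [hfd, hLh, hLg, Complex.star_def]
  have eI : fderiv ℝ f z Complex.I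
      = deriv h z * Complex.I - (starRingEnd ℂ) (deriv g z) * Complex.I := by
    simp [hfd, hLh, hLg, Complex.star_def, map_mul, Complex.conj_I]
    ring
  constructor
  · rw [wZ, e1, eI]
    have : Complex.I * Complex.I = -1 := Complex.I_mul_I
    field_simp
    linear_combination ((starRingEnd ℂ) (deriv g z) - deriv h z) * this
  · rw [wZbar, e1, eI]
    have : Complex.I * Complex.I = -1 := Complex.I_mul_I
    field_simp
    linear_combination (deriv h z - (starRingEnd ℂ) (deriv g z)) * this

lemma eventuallyEq_of_decomp {f h g : ℂ → ℂ} {z : ℂ} (hz : z ∈ unitDisk)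
    (heq : ∀ w ∈ unitDisk, f w = h w + (starRingEnd ℂ) (g w)) :
    f =ᶠ[𝓝 z] fun w => h w + (starRingEnd ℂ) (g w) :=
  Filter.eventuallyEq_of_mem (isOpen_unitDisk.mem_nhds hz) heq

lemma one_sub_sq_pos {z : ℂ} (hz : z ∈ unitDisk) : 0 < 1 - ‖z‖ ^ 2 := by
  have := mem_unitDisk_iff.mp hz
  nlinarith [norm_nonneg z]

lemma factor_pos {α : ℝ} {z : ℂ} (hz : z ∈ unitDisk) : 0 < (1 - ‖z‖ ^ 2) ^ α :=
  Real.rpow_pos_of_pos (one_sub_sq_pos hz) α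

lemma factor_le_one {α : ℝ} (hα : 0 < α) {z : ℂ} (hz : z ∈ unitDisk) :
    (1 - ‖z‖ ^ 2) ^ α ≤ 1 :=
  Real.rpow_le_one (one_sub_sq_pos hz).le (by nlinarith [norm_nonneg z]) hα.le

lemma weight_nonneg {α : ℝ} {f : ℂ → ℂ} {z : ℂ} (hz : z ∈ unitDisk) : 0 ≤ weight α f z := by
  have := factor_pos (α := α) hz
  exact mul_nonneg this.le (by positivity)

lemma weight_le_semiNorm {α : ℝ} {f : ℂ → ℂ} (hb : BddAbove (weight α f '' unitDisk))
    {z : ℂ} (hz : z ∈ unitDisk) : weight α f z ≤ semiNorm α f :=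
  le_csSup hb (mem_image_of_mem _ hz)

lemma semiNorm_le {α : ℝ} {f : ℂ → ℂ} {c : ℝ} (hc : 0 ≤ c)
    (h : ∀ z ∈ unitDisk, weight α f z ≤ c) : semiNorm α f ≤ c :=
  Real.sSup_le (by rintro x ⟨z, hz, rfl⟩; exact h z hz) hc

lemma semiNorm_nonneg {α : ℝ} {f : ℂ → ℂ} : 0 ≤ semiNorm α f :=
  Real.sSup_nonneg (by rintro x ⟨z, hz, rfl⟩; exact weight_nonneg hz)

lemma semiNorm_le_HBnorm {α : ℝ} {f : ℂ → ℂ} : semiNorm α f ≤ HBnorm α f := by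
  have := norm_nonneg (f 0); simp only [HBnorm]; linarith

lemma HBnorm_nonneg {α : ℝ} {f : ℂ → ℂ} : 0 ≤ HBnorm α f := by
  have := norm_nonneg (f 0); have := semiNorm_nonneg (α := α) (f := f)
  simp only [HBnorm]; linarith

lemma weight_eq_of_decomp {α : ℝ} {f h g : ℂ → ℂ} {z : ℂ} (hz : z ∈ unitDisk)
    (hh : DifferentiableOn ℂ h unitDisk) (hg : DifferentiableOn ℂ g unitDisk)
    (heq : ∀ w ∈ unitDisk, f w = h w + (starRingEnd ℂ) (g w)) :
    weight α f z = (1 - ‖z‖ ^ 2) ^ α *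
      (‖deriv h z‖ + ‖deriv g z‖) := by
  obtain ⟨e1, e2⟩ := wirtinger_of_decomp
    (hh.differentiableAt (isOpen_unitDisk.mem_nhds hz))
    (hg.differentiableAt (isOpen_unitDisk.mem_nhds hz))
    (eventuallyEq_of_decomp hz heq)
  rw [weight, e1, e2, Complex.norm_conj]

lemma decomp_sub {f1 f2 h1 g1 h2 g2 : ℂ → ℂ}
    (heq1 : ∀ w ∈ unitDisk, f1 w = h1 w + (starRingEnd ℂ) (g1 w))
    (heq2 : ∀ w ∈ unitDisk, f2 w = h2 w + (starRingEnd ℂ) (g2 w)) :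
    ∀ w ∈ unitDisk, (f1 - f2) w = (h1 - h2) w + (starRingEnd ℂ) ((g1 - g2) w) := by
  intro w hw
  simp only [Pi.sub_apply, heq1 w hw, heq2 w hw, map_sub]
  ring

lemma differentiableAt_of_harmonic {f : ℂ → ℂ} (hf : HarmonicDisk f) {z : ℂ}
    (hz : z ∈ unitDisk) : DifferentiableAt ℝ f z := by
  obtain ⟨h, g, hh, hg, heq⟩ := hf
  have hdh : DifferentiableAt ℝ h z :=
    ((hh.differentiableAt (isOpen_unitDisk.mem_nhds hz))).restrictScalars ℝ
  have hdg : DifferentiableAt ℝ (fun w => (starRingEnd ℂ) (g w)) z := by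
    have : DifferentiableAt ℝ g z :=
      ((hg.differentiableAt (isOpen_unitDisk.mem_nhds hz))).restrictScalars ℝ
    simpa [Complex.star_def] using this.star
  exact (hdh.add hdg).congr_of_eventuallyEq (eventuallyEq_of_decomp hz heq)

lemma absSub (a b : ℂ) : ‖a - b‖ ≤ ‖a‖ + ‖b‖ := by
  simpa using norm_sub_le a b

lemma abs_le_abs_add_sub (a b : ℂ) : ‖a‖ ≤ ‖b‖ + ‖a - b‖ := by
  calc ‖a‖ = ‖b + (a - b)‖ := by ring_nf
    _ ≤ _ := norm_add_le _ _

lemma weight_sub_le {α : ℝ} {f1 f2 h1 g1 h2 g2 : ℂ → ℂ} {z : ℂ} (hz : z ∈ unitDisk)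
    (hh1 : DifferentiableOn ℂ h1 unitDisk) (hg1 : DifferentiableOn ℂ g1 unitDisk)
    (hh2 : DifferentiableOn ℂ h2 unitDisk) (hg2 : DifferentiableOn ℂ g2 unitDisk)
    (heq1 : ∀ w ∈ unitDisk, f1 w = h1 w + (starRingEnd ℂ) (g1 w))
    (heq2 : ∀ w ∈ unitDisk, f2 w = h2 w + (starRingEnd ℂ) (g2 w)) :
    weight α (f1 - f2) z ≤ weight α f1 z + weight α f2 z := by
  have hd1 : DifferentiableAt ℂ h1 z := hh1.differentiableAt (isOpen_unitDisk.mem_nhds hz)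
  have hd2 : DifferentiableAt ℂ h2 z := hh2.differentiableAt (isOpen_unitDisk.mem_nhds hz)
  have he1 : DifferentiableAt ℂ g1 z := hg1.differentiableAt (isOpen_unitDisk.mem_nhds hz)
  have he2 : DifferentiableAt ℂ g2 z := hg2.differentiableAt (isOpen_unitDisk.mem_nhds hz)
  rw [weight_eq_of_decomp hz (hh1.sub hh2) (hg1.sub hg2) (decomp_sub heq1 heq2),
    weight_eq_of_decomp hz hh1 hg1 heq1, weight_eq_of_decomp hz hh2 hg2 heq2]
  rw [show deriv (h1 - h2) z = deriv h1 z - deriv h2 z from deriv_sub hd1 hd2,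
    show deriv (g1 - g2) z = deriv g1 z - deriv g2 z from deriv_sub he1 he2]
  have hF := (factor_pos (α := α) hz).le
  have t1 := absSub (deriv h1 z) (deriv h2 z)
  have t2 := absSub (deriv g1 z) (deriv g2 z)
  nlinarith [norm_nonneg (deriv h1 z - deriv h2 z), norm_nonneg (deriv g1 z - deriv g2 z)]

lemma weight_le_add {α : ℝ} {f1 f2 h1 g1 h2 g2 : ℂ → ℂ} {z : ℂ} (hz : z ∈ unitDisk)
    (hh1 : DifferentiableOn ℂ h1 unitDisk) (hg1 : DifferentiableOn ℂ g1 unitDisk)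
    (hh2 : DifferentiableOn ℂ h2 unitDisk) (hg2 : DifferentiableOn ℂ g2 unitDisk)
    (heq1 : ∀ w ∈ unitDisk, f1 w = h1 w + (starRingEnd ℂ) (g1 w))
    (heq2 : ∀ w ∈ unitDisk, f2 w = h2 w + (starRingEnd ℂ) (g2 w)) :
    weight α f1 z ≤ weight α f2 z + weight α (f1 - f2) z := by
  have hd1 : DifferentiableAt ℂ h1 z := hh1.differentiableAt (isOpen_unitDisk.mem_nhds hz)
  have hd2 : DifferentiableAt ℂ h2 z := hh2.differentiableAt (isOpen_unitDisk.mem_nhds hz)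
  have he1 : DifferentiableAt ℂ g1 z := hg1.differentiableAt (isOpen_unitDisk.mem_nhds hz)
  have he2 : DifferentiableAt ℂ g2 z := hg2.differentiableAt (isOpen_unitDisk.mem_nhds hz)
  rw [weight_eq_of_decomp hz (hh1.sub hh2) (hg1.sub hg2) (decomp_sub heq1 heq2),
    weight_eq_of_decomp hz hh1 hg1 heq1, weight_eq_of_decomp hz hh2 hg2 heq2,
    show deriv (h1 - h2) z = deriv h1 z - deriv h2 z from deriv_sub hd1 hd2,
    show deriv (g1 - g2) z = deriv g1 z - deriv g2 z from deriv_sub he1 he2]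
  have hF := (factor_pos (α := α) hz).le
  have t1 := abs_le_abs_add_sub (deriv h1 z) (deriv h2 z)
  have t2 := abs_le_abs_add_sub (deriv g1 z) (deriv g2 z)
  nlinarith [norm_nonneg (deriv h1 z - deriv h2 z), norm_nonneg (deriv g1 z - deriv g2 z)]

lemma bddAbove_weight_sub {α : ℝ} {f1 f2 : ℂ → ℂ} (H1 : memHB α f1) (H2 : memHB α f2) :
    BddAbove (weight α (f1 - f2) '' unitDisk) := by
  obtain ⟨⟨h1, g1, hh1, hg1, heq1⟩, hb1⟩ := H1
  obtain ⟨⟨h2, g2, hh2, hg2, heq2⟩, hb2⟩ := H2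
  refine ⟨semiNorm α f1 + semiNorm α f2, ?_⟩
  rintro x ⟨z, hz, rfl⟩
  exact le_trans (weight_sub_le hz hh1 hg1 hh2 hg2 heq1 heq2)
    (add_le_add (weight_le_semiNorm hb1 hz) (weight_le_semiNorm hb2 hz))

lemma weight_le_of_memHB {α : ℝ} {f1 f2 : ℂ → ℂ} (H1 : memHB α f1) (H2 : memHB α f2)
    {z : ℂ} (hz : z ∈ unitDisk) :
    weight α f1 z ≤ weight α f2 z + semiNorm α (f1 - f2) := by
  obtain ⟨⟨h1, g1, hh1, hg1, heq1⟩, hb1⟩ := H1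
  obtain ⟨⟨h2, g2, hh2, hg2, heq2⟩, hb2⟩ := H2
  refine le_trans (weight_le_add hz hh1 hg1 hh2 hg2 heq1 heq2) (add_le_add_right ?_ _)
  exact weight_le_semiNorm (bddAbove_weight_sub ⟨⟨h1, g1, hh1, hg1, heq1⟩, hb1⟩
    ⟨⟨h2, g2, hh2, hg2, heq2⟩, hb2⟩) hz

lemma HBnorm_triangle {α : ℝ} {f1 f2 : ℂ → ℂ} (H1 : memHB α f1) (H2 : memHB α f2) :
    HBnorm α f1 ≤ HBnorm α f2 + HBnorm α (f1 - f2) := by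
  have h0 : ‖f1 0‖ ≤ ‖f2 0‖ + ‖(f1 - f2) 0‖ := by
    simpa using abs_le_abs_add_sub (f1 0) (f2 0)
  have hs : semiNorm α f1 ≤ semiNorm α f2 + semiNorm α (f1 - f2) := by
    have hnn : (0:ℝ) ≤ semiNorm α f2 + semiNorm α (f1 - f2) :=
      add_nonneg semiNorm_nonneg semiNorm_nonneg
    refine semiNorm_le hnn fun z hz => ?_
    exact le_trans (weight_le_of_memHB H1 H2 hz)
      (add_le_add_left (weight_le_semiNorm H2.2 hz) _)
  simp only [HBnorm]; linarith

lemma decomp_normalized {f : ℂ → ℂ} (hf : HarmonicDisk f) :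
    ∃ h g : ℂ → ℂ, DifferentiableOn ℂ h unitDisk ∧ DifferentiableOn ℂ g unitDisk ∧
      (∀ z ∈ unitDisk, f z = h z + (starRingEnd ℂ) (g z)) ∧ g 0 = 0 ∧ h 0 = f 0 := by
  obtain ⟨h0, g0, hh0, hg0, heq0⟩ := hf
  refine ⟨fun z => h0 z + (starRingEnd ℂ) (g0 0), fun z => g0 z - g0 0,
    hh0.add_const _, hg0.sub_const _, ?_, by simp, ?_⟩
  · intro z hz
    rw [heq0 z hz, map_sub]
    ring
  · rw [heq0 0 zero_mem_unitDisk]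

lemma closedBall_subset_unitDisk {r : ℝ} (hr : r < 1) :
    Metric.closedBall (0:ℂ) r ⊆ unitDisk := by
  intro z hz
  rw [mem_unitDisk_iff]
  have := Metric.mem_closedBall.mp hz
  rw [Complex.dist_eq, sub_zero] at this
  linarith

lemma deriv_bound_of_weight_le {α M : ℝ} (hα : 0 < α) {r : ℝ} (h0r : 0 ≤ r) (hr : r < 1)
    {f h g : ℂ → ℂ}
    (hh : DifferentiableOn ℂ h unitDisk) (hg : DifferentiableOn ℂ g unitDisk)
    (heq : ∀ w ∈ unitDisk, f w = h w + (starRingEnd ℂ) (g w))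
    (hw : ∀ z ∈ unitDisk, weight α f z ≤ M) :
    ∀ z ∈ Metric.closedBall (0:ℂ) r,
      ‖deriv h z‖ ≤ M / (1 - r^2)^α ∧ ‖deriv g z‖ ≤ M / (1 - r^2)^α := by
  intro z hzB
  have hzD : z ∈ unitDisk := closedBall_subset_unitDisk hr hzB
  have hzr : ‖z‖ ≤ r := by
    have := Metric.mem_closedBall.mp hzB; rwa [Complex.dist_eq, sub_zero] at this
  have hr2 : 0 < 1 - r^2 := by nlinarith
  have hBpos : 0 < (1 - r^2)^α := Real.rpow_pos_of_pos hr2 α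
  have hAB : (1 - r^2)^α ≤ (1 - ‖z‖ ^ 2)^α := by
    apply Real.rpow_le_rpow hr2.le _ hα.le
    have : ‖z‖ ^ 2 ≤ r^2 := by nlinarith [norm_nonneg z]
    linarith
  have hwz := hw z hzD
  rw [weight_eq_of_decomp hzD hh hg heq] at hwz
  have hx : 0 ≤ ‖deriv h z‖ := norm_nonneg _
  have hy : 0 ≤ ‖deriv g z‖ := norm_nonneg _
  have hApos : 0 < (1 - ‖z‖ ^ 2)^α := factor_pos hzD
  constructor
  · rw [le_div_iff₀ hBpos]
    nlinarith
  · rw [le_div_iff₀ hBpos]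
    nlinarith

lemma lipschitz_of_deriv_bound {h : ℂ → ℂ} (hh : DifferentiableOn ℂ h unitDisk)
    {r C : ℝ} (hr : r < 1)
    (hb : ∀ z ∈ Metric.closedBall (0:ℂ) r, ‖deriv h z‖ ≤ C) :
    ∀ x ∈ Metric.closedBall (0:ℂ) r, ∀ y ∈ Metric.closedBall (0:ℂ) r,
      dist (h x) (h y) ≤ C * dist x y := by
  have hdiff : ∀ x ∈ Metric.closedBall (0:ℂ) r, DifferentiableAt ℂ h x := fun x hx =>
    hh.differentiableAt (isOpen_unitDisk.mem_nhds (closedBall_subset_unitDisk hr hx))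
  have hbound : ∀ x ∈ Metric.closedBall (0:ℂ) r, ‖fderiv ℂ h x‖ ≤ C := by
    intro x hx
    rw [← toSpanSingleton_deriv, ContinuousLinearMap.norm_toSpanSingleton]
    have h1 : ‖(1 : ℂ →L[ℂ] ℂ)‖ = 1 := by
      rw [ContinuousLinearMap.one_def, ContinuousLinearMap.norm_id]
    exact hb x hx
  intro x hx y hy
  rw [dist_eq_norm, dist_eq_norm]
  exact (convex_closedBall (0:ℂ) r).norm_image_sub_le_of_norm_fderiv_le hdiff hbound hy hx

lemma TLU_subseq {F : ℕ → ℂ → ℂ} {G : ℂ → ℂ} {s : Set ℂ}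
    (h : TendstoLocallyUniformlyOn F G atTop s) {σ : ℕ → ℕ} (hσ : StrictMono σ) :
    TendstoLocallyUniformlyOn (fun j => F (σ j)) G atTop s := by
  intro u hu x hx
  obtain ⟨t, ht, h2⟩ := h u hu x hx
  exact ⟨t, ht, hσ.tendsto_atTop.eventually h2⟩

lemma montel (F : ℕ → ℂ → ℂ)
    (hV : ∀ r : ℝ, r < 1 → ∃ C : ℝ, ∀ n, ∀ z ∈ Metric.closedBall (0:ℂ) r, ‖F n z‖ ≤ C)
    (hLip : ∀ r : ℝ, r < 1 → ∃ C : ℝ, 0 ≤ C ∧ ∀ n, ∀ x ∈ Metric.closedBall (0:ℂ) r,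
      ∀ y ∈ Metric.closedBall (0:ℂ) r, dist (F n x) (F n y) ≤ C * dist x y) :
    ∃ σ : ℕ → ℕ, StrictMono σ ∧ ∃ G : ℂ → ℂ,
      TendstoLocallyUniformlyOn (fun j => F (σ j)) G atTop unitDisk := by
  obtain ⟨w, hw⟩ := TopologicalSpace.exists_dense_seq ℂ
  -- bounded values at the dense points
  set B : ℕ → ℝ := fun k =>
    if h : ‖w k‖ < 1 then max 0 (Classical.choose (hV _ h)) else 0 with hB
  set v : ℕ → ℕ → ℂ := fun n k => if ‖w k‖ < 1 then F n (w k) else 0 with hv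
  have hvB : ∀ n, v n ∈ Set.pi Set.univ (fun k => Metric.closedBall (0:ℂ) (B k)) := by
    intro n k _
    simp only [hv, hB]
    by_cases h : ‖w k‖ < 1
    · rw [if_pos h, dif_pos h]
      have hmem : w k ∈ Metric.closedBall (0:ℂ) (‖w k‖) := by
        simp [Metric.mem_closedBall, Complex.dist_eq]
      have hle := Classical.choose_spec (hV _ h) n (w k) hmem
      exact Metric.mem_closedBall.mpr
        (by rw [Complex.dist_eq, sub_zero]; exact le_max_of_le_right hle)
    · rw [if_neg h, dif_neg h]; simp
  have hScpt : IsCompact (Set.pi Set.univ (fun k => Metric.closedBall (0:ℂ) (B k))) :=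
    isCompact_univ_pi (fun k => isCompact_closedBall 0 (B k))
  obtain ⟨L, -, σ, hσ, hconv⟩ := hScpt.tendsto_subseq hvB
  have hpt : ∀ k, ‖w k‖ < 1 →
      Tendsto (fun j => F (σ j) (w k)) atTop (𝓝 (L k)) := by
    intro k hk
    have := tendsto_pi_nhds.mp hconv k
    simpa [hv, hk, Function.comp] using this
  -- pointwise Cauchy on the disk
  have hC : ∀ z ∈ unitDisk, CauchySeq (fun j => F (σ j) z) := by
    intro z hz
    have hz1 : ‖z‖ < 1 := mem_unitDisk_iff.mp hz
    have habs : 0 ≤ ‖z‖ := norm_nonneg z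
    obtain ⟨C, hC0, hCl⟩ := hLip ((1 + ‖z‖)/2) (by linarith)
    rw [Metric.cauchySeq_iff]
    intro ε hε
    set δ : ℝ := min ((1 - ‖z‖)/2) (ε/(3*(C+1))) with hδdef
    have hδpos : 0 < δ := lt_min (by linarith) (by positivity)
    obtain ⟨k, hk⟩ := hw.exists_dist_lt z hδpos
    have hwk : ‖w k‖ ≤ (1 + ‖z‖)/2 := by
      have : ‖w k‖ ≤ ‖z‖ + δ := by
        have := norm_sub_le_norm_sub_add_norm_sub (w k) z 0
        simp only [sub_zero] at this
        have h2 : ‖w k - z‖ < δ := by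
          rw [← Complex.dist_eq, dist_comm]; exact hk
        calc ‖w k‖ ≤ ‖w k - z‖ + ‖z‖ := by
              have := norm_add_le (w k - z) z; simpa using this
          _ ≤ ‖z‖ + δ := by linarith
      have : ‖w k‖ ≤ ‖z‖ + (1 - ‖z‖)/2 :=
        le_trans this (by have := min_le_left ((1 - ‖z‖)/2) (ε/(3*(C+1))); linarith)
      linarith
    have hwk1 : ‖w k‖ < 1 := lt_of_le_of_lt hwk (by linarith)
    have hcau : CauchySeq (fun j => F (σ j) (w k)) := (hpt k hwk1).cauchySeq
    rw [Metric.cauchySeq_iff] at hcau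
    obtain ⟨N, hN⟩ := hcau (ε/3) (by positivity)
    refine ⟨N, fun m hm n hn => ?_⟩
    have hzmem : z ∈ Metric.closedBall (0:ℂ) ((1 + ‖z‖)/2) := by
      simp [Metric.mem_closedBall, Complex.dist_eq]; linarith
    have hwmem : w k ∈ Metric.closedBall (0:ℂ) ((1 + ‖z‖)/2) := by
      simp [Metric.mem_closedBall, Complex.dist_eq]; linarith
    have hdzw : dist z (w k) ≤ δ := hk.le
    have hCδ : C * δ ≤ ε/3 := by
      have h1 : δ ≤ ε/(3*(C+1)) := min_le_right _ _
      have h2 : C * δ ≤ C * (ε/(3*(C+1))) := by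
        apply mul_le_mul_of_nonneg_left h1 hC0
      have h3 : C * (ε/(3*(C+1))) ≤ (C+1) * (ε/(3*(C+1))) := by
        apply mul_le_mul_of_nonneg_right (by linarith) (by positivity)
      have h4 : (C+1) * (ε/(3*(C+1))) = ε/3 := by field_simp
      linarith
    calc dist (F (σ m) z) (F (σ n) z)
        ≤ dist (F (σ m) z) (F (σ m) (w k)) + dist (F (σ m) (w k)) (F (σ n) (w k))
          + dist (F (σ n) (w k)) (F (σ n) z) := dist_triangle4 _ _ _ _
      _ < C * δ + ε/3 + C * δ := by
          have t1 : dist (F (σ m) z) (F (σ m) (w k)) ≤ C * δ :=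
            le_trans (hCl (σ m) z hzmem (w k) hwmem)
              (mul_le_mul_of_nonneg_left hdzw hC0)
          have t2 : dist (F (σ n) (w k)) (F (σ n) z) ≤ C * δ := by
            rw [dist_comm]
            exact le_trans (hCl (σ n) z hzmem (w k) hwmem)
              (mul_le_mul_of_nonneg_left hdzw hC0)
          have t3 := hN m hm n hn
          linarith
      _ ≤ ε := by linarith
  -- define the limit function
  set G : ℂ → ℂ := fun z => limUnder atTop (fun j => F (σ j) z) with hG
  have hGz : ∀ z ∈ unitDisk, Tendsto (fun j => F (σ j) z) atTop (𝓝 (G z)) :=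
    fun z hz => (hC z hz).tendsto_limUnder
  refine ⟨σ, hσ, G, ?_⟩
  rw [tendstoLocallyUniformlyOn_iff_forall_isCompact isOpen_unitDisk]
  intro Kc hKU hKcpt
  rcases Kc.eq_empty_or_nonempty with rfl | hne
  · exact tendstoUniformlyOn_empty
  obtain ⟨z0, hz0K, hmax⟩ := hKcpt.exists_isMaxOn hne (continuous_norm.continuousOn)
  set r0 : ℝ := ‖z0‖ with hr0
  have hr0lt : r0 < 1 := mem_unitDisk_iff.mp (hKU hz0K)
  have hr0nn : 0 ≤ r0 := norm_nonneg z0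
  have hKsub : Kc ⊆ Metric.closedBall (0:ℂ) r0 := by
    intro x hx
    simp only [Metric.mem_closedBall, Complex.dist_eq, sub_zero]
    exact hmax hx
  refine TendstoUniformlyOn.mono ?_ hKsub
  set r : ℝ := (1 + r0)/2 with hr
  have hrlt : r < 1 := by simp only [hr]; linarith
  have hr0r : r0 < r := by simp only [hr]; linarith
  obtain ⟨C, hC0, hCl⟩ := hLip r hrlt
  -- G is C-Lipschitz on closedBall 0 r
  have hGLip : ∀ x ∈ Metric.closedBall (0:ℂ) r, ∀ y ∈ Metric.closedBall (0:ℂ) r,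
      dist (G x) (G y) ≤ C * dist x y := by
    intro x hx y hy
    have hxD : x ∈ unitDisk := by
      rw [mem_unitDisk_iff]
      have := Metric.mem_closedBall.mp hx
      rw [Complex.dist_eq, sub_zero] at this; linarith
    have hyD : y ∈ unitDisk := by
      rw [mem_unitDisk_iff]
      have := Metric.mem_closedBall.mp hy
      rw [Complex.dist_eq, sub_zero] at this; linarith
    have htt : Tendsto (fun j => dist (F (σ j) x) (F (σ j) y)) atTop (𝓝 (dist (G x) (G y))) :=
      ((hGz x hxD).dist (hGz y hyD))
    exact le_of_tendsto htt (Filter.Eventually.of_forall fun j => hCl (σ j) x hx y hy)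
  rw [Metric.tendstoUniformlyOn_iff]
  intro ε hε
  set δ : ℝ := min ((r - r0)/2) (ε/(6*(C+1))) with hδdef
  have hδpos : 0 < δ := lt_min (by linarith) (by positivity)
  -- finite subcover by balls around dense points
  have hcover : Metric.closedBall (0:ℂ) r0 ⊆ ⋃ k : ℕ, Metric.ball (w k) δ := by
    intro x _
    obtain ⟨k, hk⟩ := hw.exists_dist_lt x hδpos
    exact Set.mem_iUnion.mpr ⟨k, by rwa [Metric.mem_ball]⟩
  obtain ⟨t, ht⟩ := (isCompact_closedBall (0:ℂ) r0).elim_finite_subcover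
    (fun k => Metric.ball (w k) δ) (fun k => Metric.isOpen_ball) hcover
  have hev : ∀ᶠ j in atTop, ∀ k ∈ t, ‖w k‖ < 1 →
      dist (F (σ j) (w k)) (G (w k)) < ε/3 := by
    rw [eventually_all_finset]
    intro k _
    by_cases hk1 : ‖w k‖ < 1
    · have := hGz (w k) (mem_unitDisk_iff.mpr hk1)
      have h2 : ∀ᶠ j in atTop, dist (F (σ j) (w k)) (G (w k)) < ε/3 :=
        (Metric.tendsto_nhds.mp this) (ε/3) (by positivity)
      filter_upwards [h2] with j hj _
      exact hj
    · exact Filter.Eventually.of_forall fun j h => absurd h hk1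
  filter_upwards [hev] with j hj x hx
  obtain ⟨k, hkt, hxk⟩ := Set.mem_iUnion₂.mp (ht hx)
  have hxwk : dist x (w k) < δ := by rwa [Metric.mem_ball] at hxk
  have hxr0 : ‖x‖ ≤ r0 := by
    have := Metric.mem_closedBall.mp hx
    rwa [Complex.dist_eq, sub_zero] at this
  have hwkr : ‖w k‖ ≤ r := by
    have h1 : ‖w k‖ ≤ ‖x‖ + dist x (w k) := by
      have := dist_triangle (w k) x (0:ℂ)
      simp only [Complex.dist_eq, sub_zero] at this ⊢
      calc ‖w k‖ ≤ ‖w k - x‖ + ‖x‖ := by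
            have := norm_add_le (w k - x) x; simpa using this
        _ = ‖x‖ + ‖x - w k‖ := by rw [norm_sub_rev]; ring
    have hδr : δ ≤ (r - r0)/2 := min_le_left _ _
    linarith
  have hwk1 : ‖w k‖ < 1 := lt_of_le_of_lt hwkr hrlt
  have hxmem : x ∈ Metric.closedBall (0:ℂ) r := by
    simp only [Metric.mem_closedBall, Complex.dist_eq, sub_zero]; linarith
  have hwkmem : w k ∈ Metric.closedBall (0:ℂ) r := by
    simp only [Metric.mem_closedBall, Complex.dist_eq, sub_zero]; exact hwkr
  have hCδ : C * δ ≤ ε/6 := by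
    have h1 : δ ≤ ε/(6*(C+1)) := min_le_right _ _
    have h2 : C * δ ≤ C * (ε/(6*(C+1))) := mul_le_mul_of_nonneg_left h1 hC0
    have h3 : C * (ε/(6*(C+1))) ≤ (C+1) * (ε/(6*(C+1))) :=
      mul_le_mul_of_nonneg_right (by linarith) (by positivity)
    have h4 : (C+1) * (ε/(6*(C+1))) = ε/6 := by field_simp
    linarith
  calc dist (G x) (F (σ j) x)
      ≤ dist (G x) (G (w k)) + dist (G (w k)) (F (σ j) (w k))
        + dist (F (σ j) (w k)) (F (σ j) x) := dist_triangle4 _ _ _ _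
    _ < C * δ + ε/3 + C * δ := by
        have t1 : dist (G x) (G (w k)) ≤ C * δ :=
          le_trans (hGLip x hxmem (w k) hwkmem) (mul_le_mul_of_nonneg_left hxwk.le hC0)
        have t2 : dist (F (σ j) (w k)) (F (σ j) x) ≤ C * δ := by
          rw [dist_comm]
          exact le_trans (hCl (σ j) x hxmem (w k) hwkmem)
            (mul_le_mul_of_nonneg_left hxwk.le hC0)
        have t3 : dist (G (w k)) (F (σ j) (w k)) < ε/3 := by
          rw [dist_comm]; exact hj k hkt hwk1
        linarith
    _ ≤ ε := by linarith

/-- A (sequentially) closed subset K of HB₀(α) is (sequentially) compact iff it is bounded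
and satisfies lim_{|z|→1} sup_{f ∈ K} weight α f z = 0. -/
theorem compact_subset_HB0_iff (α : ℝ) (hα : 0 < α) (K : Set (ℂ → ℂ))
    (hK : ∀ f ∈ K, memHB0 α f)
    (hclosed : ∀ f : ℕ → ℂ → ℂ, (∀ n, f n ∈ K) → ∀ g, memHB0 α g →
      Tendsto (fun n => HBnorm α (f n - g)) atTop (nhds 0) → g ∈ K) :
    (∀ f : ℕ → ℂ → ℂ, (∀ n, f n ∈ K) →
        ∃ σ : ℕ → ℕ, StrictMono σ ∧ ∃ g ∈ K,
          Tendsto (fun k => HBnorm α (f (σ k) - g)) atTop (nhds 0)) ↔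
      ((∃ M : ℝ, ∀ f ∈ K, HBnorm α f ≤ M) ∧
        ∀ ε > 0, ∃ r < (1:ℝ), ∀ f ∈ K, ∀ z ∈ unitDisk, r < ‖z‖ → weight α f z < ε) := by
  constructor
  · intro hcpt
    constructor
    · -- boundedness
      by_contra hM
      push_neg at hM
      choose f hfK hfM using fun n : ℕ => hM (n : ℝ)
      obtain ⟨σ, hσ, g, hgK, htend⟩ := hcpt f hfK
      obtain ⟨N, hN⟩ := Metric.tendsto_atTop.mp htend 1 one_pos
      set k := max N (Nat.ceil (HBnorm α g + 1)) with hk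
      have h1 : HBnorm α (f (σ k) - g) ≤ 1 := by
        have h2 := hN k (le_max_left _ _)
        rw [Real.dist_eq, sub_zero,
          _root_.abs_of_nonneg (HBnorm_nonneg (α := α) (f := f (σ k) - g))] at h2
        linarith
      have h2 : HBnorm α (f (σ k)) ≤ HBnorm α g + 1 :=
        le_trans (HBnorm_triangle (hK _ (hfK (σ k))).1 (hK g hgK).1) (by linarith)
      have h3 : (k : ℝ) ≤ (σ k : ℝ) := by exact_mod_cast hσ.le_apply
      have h4 : (σ k : ℝ) < HBnorm α (f (σ k)) := hfM (σ k)
      have h5 : HBnorm α g + 1 ≤ (k : ℝ) := by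
        refine le_trans (Nat.le_ceil _) ?_
        exact_mod_cast le_max_right N (Nat.ceil (HBnorm α g + 1))
      linarith
    · -- uniform vanishing
      by_contra hvan
      push_neg at hvan
      obtain ⟨ε, hε, hcontra⟩ := hvan
      have hsel : ∀ n : ℕ, ∃ f ∈ K, ∃ z ∈ unitDisk,
          1 - 1/((n:ℝ)+1) < ‖z‖ ∧ ε ≤ weight α f z := by
        intro n
        obtain ⟨f, hfK, z, hzD, hzabs, hzw⟩ := hcontra (1 - 1/((n:ℝ)+1))
          (by have : (0:ℝ) < 1/((n:ℝ)+1) := by positivity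
              linarith)
        exact ⟨f, hfK, z, hzD, hzabs, hzw⟩
      choose f hfK z hzD hzabs hzw using hsel
      obtain ⟨σ, hσ, g, hgK, htend⟩ := hcpt f hfK
      obtain ⟨r, hr1, hrg⟩ := (hK g hgK).2 (ε/2) (by linarith)
      obtain ⟨N1, hN1⟩ := Metric.tendsto_atTop.mp htend (ε/2) (by linarith)
      obtain ⟨N2, hN2'⟩ := exists_nat_gt (1/(1-r))
      have hN2 : 1/((N2:ℝ)+1) < 1 - r := by
        have hr1' : 0 < 1 - r := by linarith
        have hpos : 0 < 1/(1-r) := by positivity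
        have hN2pos : (0:ℝ) < (N2:ℝ)+1 := by positivity
        rw [div_lt_iff₀ hN2pos]
        rw [div_lt_iff₀ hr1'] at hN2'
        nlinarith
      set k := max N1 N2 with hk
      have hσk : (N2 : ℝ) ≤ (σ k : ℝ) := by
        exact_mod_cast le_trans (le_max_right N1 N2) hσ.le_apply
      have hrz : r < ‖z (σ k)‖ := by
        have ha := hzabs (σ k)
        have : 1/((σ k : ℝ)+1) ≤ 1/((N2:ℝ)+1) := by
          apply one_div_le_one_div_of_le (by positivity) (by linarith)
        linarith
      have key : ε ≤ weight α (f (σ k)) (z (σ k)) := hzw (σ k)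
      have hb1 : weight α (f (σ k)) (z (σ k)) ≤ weight α g (z (σ k)) +
          semiNorm α (f (σ k) - g) :=
        weight_le_of_memHB (hK _ (hfK (σ k))).1 (hK g hgK).1 (hzD (σ k))
      have hb2 : weight α g (z (σ k)) < ε/2 := hrg _ (hzD (σ k)) hrz
      have hb3 : semiNorm α (f (σ k) - g) < ε/2 := by
        have h2 := hN1 k (le_max_left _ _)
        rw [Real.dist_eq, sub_zero,
          _root_.abs_of_nonneg (HBnorm_nonneg (α := α) (f := f (σ k) - g))] at h2
        exact lt_of_le_of_lt semiNorm_le_HBnorm h2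
      linarith
  · rintro ⟨⟨M, hM⟩, hvan⟩ f hfK
    have hdec := fun n => decomp_normalized (hK _ (hfK n)).1.1
    choose h g hh hg heq hg0 hh0 using hdec
    have hwle : ∀ n, ∀ z ∈ unitDisk, weight α (f n) z ≤ M := fun n z hz =>
      le_trans (weight_le_semiNorm (hK _ (hfK n)).1.2 hz)
        (le_trans semiNorm_le_HBnorm (hM _ (hfK n)))
    have hMnn : 0 ≤ M := le_trans HBnorm_nonneg (hM _ (hfK 0))
    have hderb : ∀ r : ℝ, r < 1 → ∃ C : ℝ, 0 ≤ C ∧ ∀ n, ∀ z ∈ Metric.closedBall (0:ℂ) r,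
        ‖deriv (h n) z‖ ≤ C ∧ ‖deriv (g n) z‖ ≤ C := by
      intro r hr
      rcases le_or_gt 0 r with h0r | h0r
      · refine ⟨M / (1 - r^2)^α, ?_, fun n z hz =>
          deriv_bound_of_weight_le hα h0r hr (hh n) (hg n) (heq n) (hwle n) z hz⟩
        have hr2 : (0:ℝ) < 1 - r^2 := by nlinarith
        positivity
      · exact ⟨0, le_rfl, fun n z hz =>
          absurd hz (by simp [Metric.closedBall_eq_empty.mpr h0r])⟩
    have hLiph : ∀ r : ℝ, r < 1 → ∃ C : ℝ, 0 ≤ C ∧ ∀ n, ∀ x ∈ Metric.closedBall (0:ℂ) r,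
        ∀ y ∈ Metric.closedBall (0:ℂ) r, dist (h n x) (h n y) ≤ C * dist x y := by
      intro r hr
      obtain ⟨C, hC0, hC⟩ := hderb r hr
      exact ⟨C, hC0, fun n => lipschitz_of_deriv_bound (hh n) hr (fun z hz => (hC n z hz).1)⟩
    have hLipg : ∀ r : ℝ, r < 1 → ∃ C : ℝ, 0 ≤ C ∧ ∀ n, ∀ x ∈ Metric.closedBall (0:ℂ) r,
        ∀ y ∈ Metric.closedBall (0:ℂ) r, dist (g n x) (g n y) ≤ C * dist x y := by
      intro r hr
      obtain ⟨C, hC0, hC⟩ := hderb r hr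
      exact ⟨C, hC0, fun n => lipschitz_of_deriv_bound (hg n) hr (fun z hz => (hC n z hz).2)⟩
    have hVh : ∀ r : ℝ, r < 1 → ∃ C : ℝ, ∀ n, ∀ z ∈ Metric.closedBall (0:ℂ) r,
        ‖h n z‖ ≤ C := by
      intro r hr
      rcases le_or_gt 0 r with h0r | h0r
      · obtain ⟨C, hC0, hC⟩ := hLiph r hr
        refine ⟨M + C * r, fun n z hz => ?_⟩
        have h0mem : (0:ℂ) ∈ Metric.closedBall (0:ℂ) r := by simp [h0r]
        have hz0 : dist z 0 ≤ r := Metric.mem_closedBall.mp hz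
        have hh0n : ‖h n 0‖ ≤ M := by
          rw [hh0 n]
          calc ‖f n 0‖ ≤ HBnorm α (f n) := by
                have := semiNorm_nonneg (α := α) (f := f n)
                simp only [HBnorm]; linarith
            _ ≤ M := hM _ (hfK n)
        have hlip : dist (h n z) (h n 0) ≤ C * r :=
          le_trans (hC n z hz 0 h0mem) (mul_le_mul_of_nonneg_left hz0 hC0)
        calc ‖h n z‖ = dist (h n z) 0 := by simp [Complex.dist_eq]
          _ ≤ dist (h n z) (h n 0) + dist (h n 0) 0 := dist_triangle _ _ _
          _ ≤ M + C * r := by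
              have hd : dist (h n 0) 0 ≤ M := by
                rw [Complex.dist_eq, sub_zero]; exact hh0n
              linarith
      · exact ⟨0, fun n z hz => absurd hz (by simp [Metric.closedBall_eq_empty.mpr h0r])⟩
    have hVg : ∀ r : ℝ, r < 1 → ∃ C : ℝ, ∀ n, ∀ z ∈ Metric.closedBall (0:ℂ) r,
        ‖g n z‖ ≤ C := by
      intro r hr
      rcases le_or_gt 0 r with h0r | h0r
      · obtain ⟨C, hC0, hC⟩ := hLipg r hr
        refine ⟨C * r, fun n z hz => ?_⟩
        have h0mem : (0:ℂ) ∈ Metric.closedBall (0:ℂ) r := by simp [h0r]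
        have hz0 : dist z 0 ≤ r := Metric.mem_closedBall.mp hz
        have hlip : dist (g n z) (g n 0) ≤ C * r :=
          le_trans (hC n z hz 0 h0mem) (mul_le_mul_of_nonneg_left hz0 hC0)
        calc ‖g n z‖ = dist (g n z) (g n 0) := by
              rw [hg0 n, Complex.dist_eq, sub_zero]
          _ ≤ C * r := hlip
      · exact ⟨0, fun n z hz => absurd hz (by simp [Metric.closedBall_eq_empty.mpr h0r])⟩
    obtain ⟨σ1, hσ1, H, hTLUh⟩ := montel h hVh hLiph
    obtain ⟨σ2, hσ2, G, hTLUg⟩ := montel (fun j => g (σ1 j))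
      (fun r hr => (hVg r hr).imp fun C hC j => hC (σ1 j))
      (fun r hr => (hLipg r hr).imp fun C hC => ⟨hC.1, fun j => hC.2 (σ1 j)⟩)
    set σ : ℕ → ℕ := σ1 ∘ σ2 with hσdef
    have hσ : StrictMono σ := hσ1.comp hσ2
    have hTLUh2 : TendstoLocallyUniformlyOn (fun j => h (σ j)) H atTop unitDisk :=
      TLU_subseq hTLUh hσ2
    have hTLUg2 : TendstoLocallyUniformlyOn (fun j => g (σ j)) G atTop unitDisk := hTLUg
    have hH : DifferentiableOn ℂ H unitDisk :=
      hTLUh2.differentiableOn (Filter.Eventually.of_forall fun j => hh _) isOpen_unitDisk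
    have hG : DifferentiableOn ℂ G unitDisk :=
      hTLUg2.differentiableOn (Filter.Eventually.of_forall fun j => hg _) isOpen_unitDisk
    have hdH : TendstoLocallyUniformlyOn (fun j => deriv (h (σ j))) (deriv H) atTop unitDisk :=
      hTLUh2.deriv (Filter.Eventually.of_forall fun j => hh (σ j)) isOpen_unitDisk
    have hdG : TendstoLocallyUniformlyOn (fun j => deriv (g (σ j))) (deriv G) atTop unitDisk :=
      hTLUg2.deriv (Filter.Eventually.of_forall fun j => hg (σ j)) isOpen_unitDisk
    set ginf : ℂ → ℂ := fun z => H z + (starRingEnd ℂ) (G z) with hginf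
    have hdecinf : ∀ w ∈ unitDisk, ginf w = H w + (starRingEnd ℂ) (G w) := fun w _ => rfl
    have hptH : ∀ z ∈ unitDisk, Tendsto (fun j => deriv (h (σ j)) z) atTop (𝓝 (deriv H z)) :=
      fun z hz => hdH.tendsto_at hz
    have hptG : ∀ z ∈ unitDisk, Tendsto (fun j => deriv (g (σ j)) z) atTop (𝓝 (deriv G z)) :=
      fun z hz => hdG.tendsto_at hz
    have hwlim : ∀ z ∈ unitDisk,
        Tendsto (fun j => weight α (f (σ j)) z) atTop (𝓝 (weight α ginf z)) := by
      intro z hz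
      have h1 : Tendsto (fun j => (1 - ‖z‖ ^ 2) ^ α *
          (‖deriv (h (σ j)) z‖ + ‖deriv (g (σ j)) z‖)) atTop
          (𝓝 ((1 - ‖z‖ ^ 2) ^ α *
            (‖deriv H z‖ + ‖deriv G z‖))) := by
        apply Tendsto.const_mul
        exact ((continuous_norm.tendsto _).comp (hptH z hz)).add
          ((continuous_norm.tendsto _).comp (hptG z hz))
      rw [weight_eq_of_decomp hz hH hG hdecinf]
      exact h1.congr (fun j => (weight_eq_of_decomp hz (hh (σ j)) (hg (σ j)) (heq (σ j))).symm)
    have hginfle : ∀ z ∈ unitDisk, weight α ginf z ≤ M := fun z hz =>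
      le_of_tendsto (hwlim z hz) (Filter.Eventually.of_forall fun j => hwle (σ j) z hz)
    have hmeminf : memHB0 α ginf := by
      refine ⟨⟨⟨H, G, hH, hG, hdecinf⟩, ⟨M, ?_⟩⟩, ?_⟩
      · rintro x ⟨z, hz, rfl⟩; exact hginfle z hz
      · intro ε hε
        obtain ⟨r, hr1, hr⟩ := hvan (ε/2) (by linarith)
        refine ⟨r, hr1, fun z hz hrz => ?_⟩
        have : weight α ginf z ≤ ε/2 := le_of_tendsto (hwlim z hz)
          (Filter.Eventually.of_forall fun j => (hr _ (hfK (σ j)) z hz hrz).le)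
        linarith
    have hpt0 : Tendsto (fun j => ‖(f (σ j) - ginf) 0‖) atTop (𝓝 0) := by
      have hH0 : Tendsto (fun j => h (σ j) 0) atTop (𝓝 (H 0)) :=
        hTLUh2.tendsto_at zero_mem_unitDisk
      have hG0 : Tendsto (fun j => g (σ j) 0) atTop (𝓝 (G 0)) :=
        hTLUg2.tendsto_at zero_mem_unitDisk
      have hG0' : Tendsto (fun j => (starRingEnd ℂ) (g (σ j) 0)) atTop
          (𝓝 ((starRingEnd ℂ) (G 0))) := by
        have hc : Continuous (starRingEnd ℂ) := by
          simpa [Complex.star_def] using (continuous_star : Continuous (star : ℂ → ℂ))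
        exact (hc.tendsto _).comp hG0
      have h1 : Tendsto (fun j => f (σ j) 0) atTop (𝓝 (ginf 0)) :=
        (hH0.add hG0').congr (fun j => (heq (σ j) 0 zero_mem_unitDisk).symm)
      have h2 : Tendsto (fun j => f (σ j) 0 - ginf 0) atTop (𝓝 0) := by
        simpa using h1.sub_const (ginf 0)
      have h3 : Tendsto (fun j => ‖f (σ j) 0 - ginf 0‖) atTop (𝓝 0) := by
        have := (continuous_norm.tendsto (0:ℂ)).comp h2
        simpa [Function.comp_def] using this
      simpa using h3
    have hmain : Tendsto (fun k => HBnorm α (f (σ k) - ginf)) atTop (𝓝 0) := by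
      rw [Metric.tendsto_atTop]
      intro ε hε
      obtain ⟨r', hr'1, hr'⟩ := hvan (ε/8) (by linarith)
      set r : ℝ := max r' 0 with hrdef
      have hr1 : r < 1 := max_lt hr'1 one_pos
      have h0r : 0 ≤ r := le_max_right _ _
      have hginfsmall : ∀ z ∈ unitDisk, r < ‖z‖ → weight α ginf z ≤ ε/8 := by
        intro z hz hrz
        exact le_of_tendsto (hwlim z hz) (Filter.Eventually.of_forall fun j =>
          (hr' _ (hfK (σ j)) z hz (lt_of_le_of_lt (le_max_left r' 0) hrz)).le)
      have hKsub : Metric.closedBall (0:ℂ) r ⊆ unitDisk := closedBall_subset_unitDisk hr1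
      have hUh := (tendstoLocallyUniformlyOn_iff_forall_isCompact isOpen_unitDisk).mp hdH
        (Metric.closedBall 0 r) hKsub (isCompact_closedBall _ _)
      have hUg := (tendstoLocallyUniformlyOn_iff_forall_isCompact isOpen_unitDisk).mp hdG
        (Metric.closedBall 0 r) hKsub (isCompact_closedBall _ _)
      rw [Metric.tendstoUniformlyOn_iff] at hUh hUg
      have hev1 := hUh (ε/8) (by linarith)
      have hev2 := hUg (ε/8) (by linarith)
      have hev3 : ∀ᶠ j in atTop, ‖(f (σ j) - ginf) 0‖ < ε/8 :=
        hpt0.eventually (gt_mem_nhds (by linarith))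
      obtain ⟨N, hN⟩ := Filter.eventually_atTop.mp ((hev1.and hev2).and hev3)
      refine ⟨N, fun j hj => ?_⟩
      obtain ⟨⟨hj1, hj2⟩, hj3⟩ := hN j hj
      have hsN : semiNorm α (f (σ j) - ginf) ≤ ε/4 := by
        refine semiNorm_le (by linarith) (fun z hz => ?_)
        rcases le_or_gt (‖z‖) r with hcase | hcase
        · have hzB : z ∈ Metric.closedBall (0:ℂ) r := by
            simp only [Metric.mem_closedBall, Complex.dist_eq, sub_zero]; exact hcase
          have hdiffh : DifferentiableAt ℂ (h (σ j)) z :=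
            (hh (σ j)).differentiableAt (isOpen_unitDisk.mem_nhds hz)
          have hdiffH : DifferentiableAt ℂ H z :=
            hH.differentiableAt (isOpen_unitDisk.mem_nhds hz)
          have hdiffg : DifferentiableAt ℂ (g (σ j)) z :=
            (hg (σ j)).differentiableAt (isOpen_unitDisk.mem_nhds hz)
          have hdiffG : DifferentiableAt ℂ G z :=
            hG.differentiableAt (isOpen_unitDisk.mem_nhds hz)
          rw [weight_eq_of_decomp hz ((hh (σ j)).sub hH) ((hg (σ j)).sub hG)
            (decomp_sub (heq (σ j)) hdecinf),
            show deriv (h (σ j) - H) z = deriv (h (σ j)) z - deriv H z from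
              deriv_sub hdiffh hdiffH,
            show deriv (g (σ j) - G) z = deriv (g (σ j)) z - deriv G z from
              deriv_sub hdiffg hdiffG]
          have d1 : ‖deriv (h (σ j)) z - deriv H z‖ < ε/8 := by
            have hd := hj1 z hzB
            rw [Complex.dist_eq] at hd
            rwa [norm_sub_rev] at hd
          have d2 : ‖deriv (g (σ j)) z - deriv G z‖ < ε/8 := by
            have hd := hj2 z hzB
            rw [Complex.dist_eq] at hd
            rwa [norm_sub_rev] at hd
          have hfac := factor_le_one hα hz
          have hfacnn := (factor_pos (α := α) hz).le
          have hsum : ‖deriv (h (σ j)) z - deriv H z‖ +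
              ‖deriv (g (σ j)) z - deriv G z‖ ≤ ε/8 + ε/8 := by linarith
          have hsumnn : 0 ≤ ‖deriv (h (σ j)) z - deriv H z‖ +
              ‖deriv (g (σ j)) z - deriv G z‖ := by positivity
          have := mul_le_mul hfac hsum hsumnn zero_le_one
          linarith
        · have hb := weight_sub_le (α := α) hz (hh (σ j)) (hg (σ j)) hH hG (heq (σ j)) hdecinf
          have w1 : weight α (f (σ j)) z < ε/8 :=
            hr' _ (hfK (σ j)) z hz (lt_of_le_of_lt (le_max_left r' 0) hcase)
          have w2 : weight α ginf z ≤ ε/8 := hginfsmall z hz hcase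
          linarith
      rw [Real.dist_eq, sub_zero, _root_.abs_of_nonneg (HBnorm_nonneg (α := α))]
      have : HBnorm α (f (σ j) - ginf) = ‖(f (σ j) - ginf) 0‖ +
          semiNorm α (f (σ j) - ginf) := rfl
      rw [this]
      linarith
    exact ⟨σ, hσ, ginf, hclosed (fun j => f (σ j)) (fun j => hfK (σ j)) ginf hmeminf hmain, hmain⟩
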